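/- Let n, d be positive integers, let B be an n×d real matrix with rows b_1, …, b_n, and let A = B Bᵀ. Suppose A is positive definite, there is a constant c > 0 with ‖b_k‖ ≥ c for all k ∈ [n], and i ≠ j are indices such that the angle φ = arccos(⟨b_i, b_j⟩/(‖b_i‖‖b_j‖)) between b_i and b_j satisfies 0 < φ. Then the condition number κ(A) = λ_max(A)/λ_min(A) satisfies κ(A) ≥ c² (‖b_i‖² + ‖b_j‖²) / (2‖b_i‖²‖b_j‖² (1 − cos φ)), and consequently κ(A) ≥ c² (‖b_i‖² + ‖b_j‖²) / (‖b_i‖²‖b_j‖² φ²). -/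

import Mathlib

open scoped RealInnerProductSpace Matrix

section Aux

variable {n : ℕ}

private lemma herm_sub_algebraMap {A : Matrix (Fin n) (Fin n) ℝ} (hA : A.IsHermitian) (r : ℝ) :
    (A - algebraMap ℝ (Matrix (Fin n) (Fin n) ℝ) r).IsHermitian := by
  have h1 : (algebraMap ℝ (Matrix (Fin n) (Fin n) ℝ) r).IsHermitian := by
    rw [Algebra.algebraMap_eq_smul_one]
    simp [Matrix.IsHermitian]
  exact hA.sub h1

private lemma herm_algebraMap_sub {A : Matrix (Fin n) (Fin n) ℝ} (hA : A.IsHermitian) (r : ℝ) :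
    (algebraMap ℝ (Matrix (Fin n) (Fin n) ℝ) r - A).IsHermitian := by
  have h1 : (algebraMap ℝ (Matrix (Fin n) (Fin n) ℝ) r).IsHermitian := by
    rw [Algebra.algebraMap_eq_smul_one]
    simp [Matrix.IsHermitian]
  exact h1.sub hA

private lemma sInf_rayleigh {A : Matrix (Fin n) (Fin n) ℝ} (hA : A.IsHermitian)
    (x : Fin n → ℝ) :
    sInf (spectrum ℝ A) * (x ⬝ᵥ x) ≤ x ⬝ᵥ (A *ᵥ x) := by
  have hfin : (spectrum ℝ A).Finite := A.finite_real_spectrum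
  set r := sInf (spectrum ℝ A) with hr
  have hM : (A - algebraMap ℝ (Matrix (Fin n) (Fin n) ℝ) r).IsHermitian :=
    herm_sub_algebraMap hA r
  have hpsd : (A - algebraMap ℝ (Matrix (Fin n) (Fin n) ℝ) r).PosSemidef := by
    refine hM.posSemidef_iff_eigenvalues_nonneg.mpr fun k => ?_
    have hmem := hM.eigenvalues_mem_spectrum_real k
    rw [← spectrum.sub_singleton_eq] at hmem
    obtain ⟨lam, hlam, s, hs, hsum⟩ := Set.mem_sub.mp hmem
    rw [Set.mem_singleton_iff] at hs
    subst hs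
    have := csInf_le hfin.bddBelow hlam
    rw [← hsum]
    show (0:ℝ) ≤ _
    linarith
  have h0 := hpsd.dotProduct_mulVec_nonneg x
  simp only [star_trivial] at h0
  rw [Matrix.sub_mulVec, dotProduct_sub, Algebra.algebraMap_eq_smul_one,
    Matrix.smul_mulVec, Matrix.one_mulVec, dotProduct_smul,
    smul_eq_mul, sub_nonneg] at h0
  exact h0

private lemma sSup_rayleigh {A : Matrix (Fin n) (Fin n) ℝ} (hA : A.IsHermitian)
    (x : Fin n → ℝ) :
    x ⬝ᵥ (A *ᵥ x) ≤ sSup (spectrum ℝ A) * (x ⬝ᵥ x) := by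
  have hfin : (spectrum ℝ A).Finite := A.finite_real_spectrum
  set r := sSup (spectrum ℝ A) with hr
  have hM : (algebraMap ℝ (Matrix (Fin n) (Fin n) ℝ) r - A).IsHermitian :=
    herm_algebraMap_sub hA r
  have hpsd : (algebraMap ℝ (Matrix (Fin n) (Fin n) ℝ) r - A).PosSemidef := by
    refine hM.posSemidef_iff_eigenvalues_nonneg.mpr fun k => ?_
    have hmem := hM.eigenvalues_mem_spectrum_real k
    rw [← spectrum.singleton_sub_eq] at hmem
    obtain ⟨s, hs, lam, hlam, hsum⟩ := Set.mem_sub.mp hmem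
    rw [Set.mem_singleton_iff] at hs
    subst hs
    have := le_csSup hfin.bddAbove hlam
    rw [← hsum]
    show (0:ℝ) ≤ _
    linarith
  have h0 := hpsd.dotProduct_mulVec_nonneg x
  simp only [star_trivial] at h0
  rw [Matrix.sub_mulVec, dotProduct_sub, Algebra.algebraMap_eq_smul_one,
    Matrix.smul_mulVec, Matrix.one_mulVec, dotProduct_smul,
    smul_eq_mul, sub_nonneg] at h0
  exact h0

end Aux

/-- Proposition 2.2 of the paper, explicit quantitative form. -/
theorem condition_number_ge_of_small_angle
    {n d : ℕ} (hn : 0 < n) (hd : 0 < d)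
    (b : Fin n → EuclideanSpace ℝ (Fin d))
    (A : Matrix (Fin n) (Fin n) ℝ)
    (hA : ∀ k l, A k l = ⟪b k, b l⟫)
    (hApd : A.PosDef)
    (c : ℝ) (hc : 0 < c) (hnorm : ∀ k, c ≤ ‖b k‖)
    (i j : Fin n) (hij : i ≠ j)
    (φ : ℝ) (hφ : φ = InnerProductGeometry.angle (b i) (b j)) (hφpos : 0 < φ) :
    c ^ 2 * (‖b i‖ ^ 2 + ‖b j‖ ^ 2) / (2 * ‖b i‖ ^ 2 * ‖b j‖ ^ 2 * (1 - Real.cos φ)) ≤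
      sSup (spectrum ℝ A) / sInf (spectrum ℝ A) ∧
    c ^ 2 * (‖b i‖ ^ 2 + ‖b j‖ ^ 2) / (‖b i‖ ^ 2 * ‖b j‖ ^ 2 * φ ^ 2) ≤
      sSup (spectrum ℝ A) / sInf (spectrum ℝ A) := by
  have hH : A.IsHermitian := hApd.isHermitian
  have hfin : (spectrum ℝ A).Finite := A.finite_real_spectrum
  have hne : (spectrum ℝ A).Nonempty :=
    ⟨_, hH.eigenvalues_mem_spectrum_real ⟨0, hn⟩⟩
  set μ := sInf (spectrum ℝ A) with hμdef
  set M := sSup (spectrum ℝ A) with hMdef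
  -- positivity of μ
  have hμpos : 0 < μ := by
    have hmem : μ ∈ spectrum ℝ A := hne.csInf_mem hfin
    rw [hH.spectrum_real_eq_range_eigenvalues] at hmem
    obtain ⟨k, hk⟩ := hmem
    rw [← hk]
    exact hApd.eigenvalues_pos k
  -- basic norms
  have hPi : (0:ℝ) < ‖b i‖ := lt_of_lt_of_le hc (hnorm i)
  have hPj : (0:ℝ) < ‖b j‖ := lt_of_lt_of_le hc (hnorm j)
  set P := ‖b i‖ with hPdef
  set Q := ‖b j‖ with hQdef
  -- cos φ < 1
  have hφle : φ ≤ Real.pi := hφ ▸ InnerProductGeometry.angle_le_pi _ _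
  have hcos1 : Real.cos φ < 1 := by
    have := Real.cos_lt_cos_of_nonneg_of_le_pi (le_refl 0) hφle hφpos
    simpa using this
  -- inner product formula
  have hinner : A i j = P * Q * Real.cos φ := by
    rw [hA i j, hφ, InnerProductGeometry.cos_angle]
    field_simp
    rw [mul_assoc]
    exact (mul_div_cancel_right₀ _ (mul_pos hPi hPj).ne').symm
  have hAii : A i i = P ^ 2 := by
    rw [hA i i, real_inner_self_eq_norm_sq]
  have hAjj : A j j = Q ^ 2 := by
    rw [hA j j, real_inner_self_eq_norm_sq]
  have hAsymm : A j i = A i j := by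
    rw [hA i j, hA j i, real_inner_comm]
  -- upper bound on M: M ≥ A i i = P² ≥ c²
  have hMc : c ^ 2 ≤ M := by
    have h1 := sSup_rayleigh hH (Pi.single i (1:ℝ))
    rw [Matrix.mulVec_single] at h1
    simp [single_dotProduct, Pi.single_eq_same] at h1
    have hc2 : c ^ 2 ≤ A i i := by
      rw [hAii]
      exact pow_le_pow_left₀ hc.le (hnorm i) 2
    linarith
  -- lower bound test vector
  set x : Fin n → ℝ := Pi.single i P⁻¹ - Pi.single j Q⁻¹ with hxdef
  have hxx : x ⬝ᵥ x = P⁻¹ ^ 2 + Q⁻¹ ^ 2 := by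
    rw [hxdef, dotProduct_sub, sub_dotProduct, sub_dotProduct]
    simp only [single_dotProduct, dotProduct_single]
    rw [Pi.single_eq_same, Pi.single_eq_same, Pi.single_eq_of_ne hij,
      Pi.single_eq_of_ne (Ne.symm hij)]
    ring
  have hxAx : x ⬝ᵥ (A *ᵥ x) = 2 - 2 * Real.cos φ := by
    rw [hxdef, Matrix.mulVec_sub, Matrix.mulVec_single, Matrix.mulVec_single]
    rw [sub_dotProduct, dotProduct_sub, dotProduct_sub]
    simp only [single_dotProduct, Pi.sub_apply, Pi.smul_apply, Matrix.col_apply, op_smul_eq_mul]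
    rw [hAii, hAjj, hAsymm, hinner]
    field_simp
    ring
  have hlow := sInf_rayleigh hH x
  rw [hxx, hxAx] at hlow
  -- μ * (P+Q)/(PQ)... derive μ * (P²+Q²) ≤ 2 P² Q² (1 - cos φ)
  have hkey : μ * (P ^ 2 + Q ^ 2) ≤ 2 * P ^ 2 * Q ^ 2 * (1 - Real.cos φ) := by
    have h1 : μ * (P⁻¹ ^ 2 + Q⁻¹ ^ 2) ≤ 2 - 2 * Real.cos φ := hlow
    have h2 : P⁻¹ ^ 2 = (P ^ 2)⁻¹ := by rw [inv_pow]
    have h3 : Q⁻¹ ^ 2 = (Q ^ 2)⁻¹ := by rw [inv_pow]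
    have hP2 : (0:ℝ) < P ^ 2 := by positivity
    have hQ2 : (0:ℝ) < Q ^ 2 := by positivity
    rw [h2, h3] at h1
    have h4 := mul_le_mul_of_nonneg_left h1 (le_of_lt (mul_pos hP2 hQ2))
    calc μ * (P ^ 2 + Q ^ 2)
        = P ^ 2 * Q ^ 2 * (μ * ((P ^ 2)⁻¹ + (Q ^ 2)⁻¹)) := by
          have e1 : P ^ 2 * (P ^ 2)⁻¹ = 1 := mul_inv_cancel₀ hP2.ne'
          have e2 : Q ^ 2 * (Q ^ 2)⁻¹ = 1 := mul_inv_cancel₀ hQ2.ne'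
          linear_combination (-(μ * Q ^ 2)) * e1 + (-(μ * P ^ 2)) * e2
      _ ≤ P ^ 2 * Q ^ 2 * (2 - 2 * Real.cos φ) := h4
      _ = 2 * P ^ 2 * Q ^ 2 * (1 - Real.cos φ) := by ring
  have hden1 : (0:ℝ) < 2 * P ^ 2 * Q ^ 2 * (1 - Real.cos φ) := by
    have : 0 < 1 - Real.cos φ := by linarith
    positivity
  have hnum : (0:ℝ) ≤ c ^ 2 * (P ^ 2 + Q ^ 2) := by positivity
  have first : c ^ 2 * (P ^ 2 + Q ^ 2) / (2 * P ^ 2 * Q ^ 2 * (1 - Real.cos φ)) ≤ M / μ := by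
    rw [div_le_div_iff₀ hden1 hμpos]
    calc c ^ 2 * (P ^ 2 + Q ^ 2) * μ = c ^ 2 * (μ * (P ^ 2 + Q ^ 2)) := by ring
      _ ≤ M * (2 * P ^ 2 * Q ^ 2 * (1 - Real.cos φ)) := by
          apply mul_le_mul hMc hkey (by positivity) (by nlinarith)
  refine ⟨first, ?_⟩
  -- second: φ² ≥ 2(1 - cos φ)
  have hcosb : 2 * (1 - Real.cos φ) ≤ φ ^ 2 := by
    have := Real.one_sub_sq_div_two_le_cos (x := φ)
    linarith
  have hden2 : (0:ℝ) < P ^ 2 * Q ^ 2 * φ ^ 2 := by positivity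
  refine le_trans ?_ first
  apply div_le_div_of_nonneg_left hnum hden1
  have hP2 : (0:ℝ) < P ^ 2 := by positivity
  have hQ2 : (0:ℝ) < Q ^ 2 := by positivity
  nlinarith [mul_le_mul_of_nonneg_left hcosb (mul_pos hP2 hQ2).le]
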